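/- Let k be a field of characteristic p > 0 and let π : 𝔸¹ → 𝔸¹ be the Frobenius x ↦ x^p. Then the composition π^t ∘ π of the transpose correspondence with π, as finite correspondences on 𝔸¹, equals p times the identity correspondence. -/
import Mathlib


open MvPolynomial

/-- Let `k` be a field of characteristic `p > 0` and `π : 𝔸¹ → 𝔸¹` the
Frobenius `x ↦ x^p`.  The composition `π^t ∘ π` of the transpose correspondence with `π`,
as finite correspondences on `𝔸¹`, equals `p` times the identity correspondence.

Formalization.  Write `k[x,y,z] = MvPolynomial (Fin 3) k` (with `x = X 0` the source
variable, `y = X 1` the middle variable, `z = X 2` the target variable) and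
`k[x,z] = MvPolynomial (Fin 2) k`, included into `k[x,y,z]` by `rename ![0, 2]`.
The graph `Γ_π ⊂ 𝔸¹_x × 𝔸¹_y` is cut out by `y − x^p` and the transpose `π^t ⊂ 𝔸¹_y × 𝔸¹_z`
by `y − z^p`; the composed correspondence is the pushforward to `𝔸¹_x × 𝔸¹_z` of their
scheme-theoretic intersection, i.e. the cycle cut out by the elimination ideal
`(y − x^p, y − z^p) ∩ k[x,z]`.  The assertion `π^t ∘ π = p·Δ` says that this elimination
ideal is `(x − z)^p`, the ideal of `p` times the diagonal as an effective divisor. -/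
theorem stmt_9 (k : Type) [Field k] (p : ℕ) [Fact p.Prime] [CharP k p] :
    Ideal.comap
      (rename (![0, 2] : Fin 2 → Fin 3) :
        MvPolynomial (Fin 2) k →ₐ[k] MvPolynomial (Fin 3) k)
      (Ideal.span {X 1 - X 0 ^ p, X 1 - X 2 ^ p}) =
    Ideal.span {(X 0 : MvPolynomial (Fin 2) k) - X 1} ^ p := by
  have hspan : (Ideal.span {(X 0 : MvPolynomial (Fin 2) k) - X 1}) ^ p
      = Ideal.span {((X 0 : MvPolynomial (Fin 2) k) - X 1) ^ p} := by
    rw [Ideal.span_singleton_pow]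
  have hfrob : ((X 0 : MvPolynomial (Fin 2) k) - X 1) ^ p = X 0 ^ p - X 1 ^ p :=
    sub_pow_char _ _
  -- the retraction φ : k[x,y,z] → k[x,z], y ↦ x^p
  set φ : MvPolynomial (Fin 3) k →ₐ[k] MvPolynomial (Fin 2) k :=
    aeval ![X 0, X 0 ^ p, X 1] with hφ
  have hretr : ∀ q : MvPolynomial (Fin 2) k,
      φ (rename (![0, 2] : Fin 2 → Fin 3) q) = q := by
    intro q
    rw [hφ, aeval_rename]
    have : (![X 0, X 0 ^ p, X 1] ∘ (![0, 2] : Fin 2 → Fin 3))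
        = (X : Fin 2 → MvPolynomial (Fin 2) k) := by
      funext i; fin_cases i <;> simp
    rw [this, aeval_X_left, AlgHom.id_apply]
  apply le_antisymm
  · intro q hq
    have hmem : φ (rename (![0, 2] : Fin 2 → Fin 3) q)
        ∈ Ideal.map φ (Ideal.span {X 1 - X 0 ^ p, X 1 - X 2 ^ p}) :=
      Ideal.mem_map_of_mem _ hq
    rw [hretr] at hmem
    rw [hspan]
    refine Ideal.map_le_iff_le_comap.mpr ?_ hmem
    rw [Ideal.span_le]
    rintro r hr
    simp only [Set.mem_insert_iff, Set.mem_singleton_iff] at hr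
    rcases hr with rfl | rfl
    · simp only [SetLike.mem_coe, Ideal.mem_comap]
      have : φ (X 1 - X 0 ^ p) = 0 := by
        rw [hφ]; simp
      simp [this]
    · simp only [SetLike.mem_coe, Ideal.mem_comap]
      have : φ (X 1 - X 2 ^ p) = (X 0 : MvPolynomial (Fin 2) k) ^ p - X 1 ^ p := by
        rw [hφ]; simp
      rw [this, ← hfrob]
      exact Ideal.subset_span rfl
  · rw [hspan, Ideal.span_le]
    rintro r hr
    simp only [Set.mem_singleton_iff] at hr
    subst hr
    simp only [SetLike.mem_coe, Ideal.mem_comap]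
    have : rename (![0, 2] : Fin 2 → Fin 3) (((X 0 : MvPolynomial (Fin 2) k) - X 1) ^ p)
        = (X 1 - X 2 ^ p) - (X 1 - X 0 ^ p : MvPolynomial (Fin 3) k) := by
      rw [hfrob]
      simp only [map_sub, map_pow, rename_X, Matrix.cons_val_zero, Matrix.cons_val_one, Matrix.head_cons]
      ring
    rw [this]
    exact Ideal.sub_mem _ (Ideal.subset_span (by simp)) (Ideal.subset_span (by simp))
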